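/- If a sequence {xᵏ} in ℝⁿ is bounded and satisfies ‖x^{k+1} - xᵏ‖ → 0, then the set of its accumulation points is nonempty, compact, and connected. -/

import Mathlib

open Filter Metric Set

private lemma aux_sub {n : ℕ} {x : ℕ → EuclideanSpace ℝ (Fin n)}
    (hb : Bornology.IsBounded (Set.range x)) {t : Set (EuclideanSpace ℝ (Fin n))}
    (ht : IsClosed t) (hf : ∃ᶠ k in atTop, x k ∈ t) :
    ∃ a ∈ t, ∃ φ : ℕ → ℕ, StrictMono φ ∧ Tendsto (x ∘ φ) atTop (nhds a) := by
  obtain ⟨a, ha, φ, hφ, hlim⟩ := tendsto_subseq_of_frequently_bounded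
      (hb.subset Set.inter_subset_right)
      (hf.mono fun k hk => Set.mem_inter hk (Set.mem_range_self k))
  exact ⟨a, ht.closure_subset ((closure_mono Set.inter_subset_left) ha), φ, hφ, hlim⟩

theorem stmt_10 {n : ℕ} (x : ℕ → EuclideanSpace ℝ (Fin n))
    (hb : Bornology.IsBounded (Set.range x))
    (ho : Tendsto (fun k => ‖x (k + 1) - x k‖) atTop (nhds 0)) :
    ({a | ∃ φ : ℕ → ℕ, StrictMono φ ∧ Tendsto (x ∘ φ) atTop (nhds a)}.Nonempty ∧
      IsCompact {a | ∃ φ : ℕ → ℕ, StrictMono φ ∧ Tendsto (x ∘ φ) atTop (nhds a)} ∧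
      IsConnected {a | ∃ φ : ℕ → ℕ, StrictMono φ ∧ Tendsto (x ∘ φ) atTop (nhds a)}) := by
  classical
  set S := {a | ∃ φ : ℕ → ℕ, StrictMono φ ∧ Tendsto (x ∘ φ) atTop (nhds a)} with hSdef
  -- nonempty
  have hne : S.Nonempty := by
    obtain ⟨a, _, φ, hφ, hlim⟩ := tendsto_subseq_of_bounded hb (fun k => Set.mem_range_self k)
    exact ⟨a, φ, hφ, hlim⟩
  -- S as intersection of tail closures
  have hSeq : S = ⋂ N : ℕ, closure (x '' Set.Ici N) := by
    ext a
    constructor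
    · rintro ⟨φ, hφ, hlim⟩
      refine Set.mem_iInter.2 fun N => ?_
      refine mem_closure_of_tendsto hlim ?_
      filter_upwards [eventually_ge_atTop N] with j hj
      exact ⟨φ j, le_trans hj (hφ.id_le j), rfl⟩
    · intro ha
      have hfreq : ∀ m : ℕ, ∃ᶠ k in atTop, dist (x k) a < 1 / (m + 1) := by
        intro m
        rw [frequently_atTop]
        intro N
        have haN := Set.mem_iInter.1 ha N
        rw [Metric.mem_closure_iff] at haN
        obtain ⟨b, ⟨k, hk, rfl⟩, hdb⟩ := haN (1 / (m + 1)) (by positivity)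
        exact ⟨k, hk, by rwa [dist_comm]⟩
      obtain ⟨φ, hφ, hP⟩ := extraction_forall_of_frequently hfreq
      refine ⟨φ, hφ, Metric.tendsto_atTop.2 fun ε hε => ?_⟩
      obtain ⟨M, hM⟩ := exists_nat_one_div_lt hε
      refine ⟨M, fun m hm => lt_trans (hP m) (lt_of_le_of_lt ?_ hM)⟩
      have h1 : (M : ℝ) + 1 ≤ (m : ℝ) + 1 := by exact_mod_cast Nat.succ_le_succ hm
      exact one_div_le_one_div_of_le (by positivity) h1
  have hScl : IsClosed S := by
    rw [hSeq]; exact isClosed_iInter fun N => isClosed_closure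
  have hSsub : S ⊆ closure (Set.range x) := by
    intro a ha
    rcases ha with ⟨φ, hφ, hlim⟩
    exact mem_closure_of_tendsto hlim (Eventually.of_forall fun j => Set.mem_range_self _)
  have hScpt : IsCompact S := hb.isCompact_closure.of_isClosed_subset hScl hSsub
  refine ⟨hne, hScpt, hne, ?_⟩
  -- connectedness
  rw [isPreconnected_iff_subset_of_fully_disjoint_closed hScl]
  intro u v hu hv hsuv hdisj
  by_contra hcon
  push_neg at hcon
  obtain ⟨hnu, hnv⟩ := hcon
  set A := S ∩ u with hA
  set B := S ∩ v with hB
  have hAne : A.Nonempty := by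
    obtain ⟨s, hs, hsv⟩ := Set.not_subset.1 hnv
    rcases hsuv hs with h | h
    · exact ⟨s, hs, h⟩
    · exact absurd h hsv
  have hBne : B.Nonempty := by
    obtain ⟨s, hs, hsu⟩ := Set.not_subset.1 hnu
    rcases hsuv hs with h | h
    · exact absurd h hsu
    · exact ⟨s, hs, h⟩
  have hAcpt : IsCompact A := hScpt.of_isClosed_subset (hScl.inter hu) Set.inter_subset_left
  have hBcl : IsClosed B := hScl.inter hv
  have hABdisj : Disjoint A B :=
    (hdisj.mono Set.inter_subset_right Set.inter_subset_right)
  obtain ⟨ε, hε, hthick⟩ := hABdisj.exists_thickenings hAcpt hBcl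
  -- every point of B is infDist ≥ ε from A
  have hBfar : ∀ b ∈ B, ε ≤ infDist b A := by
    intro b hbB
    by_contra hlt
    push_neg at hlt
    have h1 : b ∈ thickening ε A := (mem_thickening_iff_infDist_lt hAne).2 hlt
    have h2 : b ∈ thickening ε B := self_subset_thickening hε B hbB
    exact (Set.disjoint_left.1 hthick) h1 h2
  set f : ℕ → ℝ := fun k => infDist (x k) A with hf
  have hlip : ∀ k, f (k + 1) ≤ f k + ‖x (k + 1) - x k‖ := by
    intro k
    have := infDist_le_infDist_add_dist (x := x (k + 1)) (y := x k) (s := A)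
    rwa [dist_eq_norm] at this
  -- frequently f small
  have hfreq_small : ∃ᶠ k in atTop, f k < ε / 3 := by
    obtain ⟨a, haA⟩ := hAne
    have h0 : Tendsto (fun j => f j) atTop (nhds (infDist a A)) → True := fun _ => trivial
    obtain ⟨φ, hφ, hlim⟩ := haA.1
    have h0 : Tendsto (fun j => f (φ j)) atTop (nhds (infDist a A)) :=
      ((continuous_infDist_pt A).continuousAt.tendsto.comp hlim)
    rw [infDist_zero_of_mem haA] at h0
    have hev : ∀ᶠ j in atTop, f (φ j) < ε / 3 := by
      have := h0 (Metric.ball_mem_nhds 0 (by positivity : (0:ℝ) < ε / 3))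
      filter_upwards [this] with j hj
      exact lt_of_le_of_lt (le_abs_self _) (by simpa [Real.dist_eq] using hj)
    exact hφ.tendsto_atTop.frequently hev.frequently
  have hfreq_big : ∃ᶠ k in atTop, 2 * ε / 3 < f k := by
    obtain ⟨b, hbB⟩ := hBne
    obtain ⟨φ, hφ, hlim⟩ := hbB.1
    have h0 : Tendsto (fun j => f (φ j)) atTop (nhds (infDist b A)) :=
      ((continuous_infDist_pt A).continuousAt.tendsto.comp hlim)
    have hev : ∀ᶠ j in atTop, 2 * ε / 3 < f (φ j) := by
      have hgt : 2 * ε / 3 < infDist b A := lt_of_lt_of_le (by linarith) (hBfar b hbB)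
      exact h0 (eventually_gt_nhds hgt)
    exact hφ.tendsto_atTop.frequently hev.frequently
  -- eventually small steps
  have hstep : ∀ᶠ k in atTop, ‖x (k + 1) - x k‖ < ε / 3 := by
    have := ho (Metric.ball_mem_nhds 0 (by positivity : (0:ℝ) < ε / 3))
    filter_upwards [this] with k hk
    simpa [Real.dist_eq, abs_of_nonneg (norm_nonneg _)] using hk
  obtain ⟨N₀, hN₀⟩ := eventually_atTop.1 hstep
  -- frequently in the middle shell
  have hshell : ∃ᶠ k in atTop, f k ∈ Set.Icc (ε / 3) (2 * ε / 3) := by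
    rw [frequently_atTop]
    intro N
    obtain ⟨k₁, hk₁ge, hk₁⟩ := frequently_atTop.1 hfreq_small (max N N₀)
    obtain ⟨k₂, hk₂ge, hk₂⟩ := frequently_atTop.1 hfreq_big (k₁ + 1)
    have hex : ∃ m, k₁ < m ∧ ε / 3 ≤ f m := ⟨k₂, hk₂ge, by linarith⟩
    set m := Nat.find hex with hm
    obtain ⟨hmgt, hmge⟩ := Nat.find_spec hex
    have hm1 : f (m - 1) < ε / 3 := by
      rcases lt_or_ge k₁ (m - 1) with h | h
      · have := Nat.find_min hex (m := m - 1) (by omega)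
        push_neg at this
        exact this h
      · have : m - 1 = k₁ := by omega
        rw [this]; exact hk₁
    have hm1N₀ : N₀ ≤ m - 1 := le_trans (le_trans (le_max_right N N₀) hk₁ge) (by omega)
    have hstep' := hN₀ (m - 1) hm1N₀
    have hmm : m - 1 + 1 = m := by omega
    rw [hmm] at hstep'
    have hle : f m ≤ f (m - 1) + ‖x m - x (m - 1)‖ := by
      have := hlip (m - 1)
      rwa [hmm] at this
    exact ⟨m, by omega, hmge, by linarith⟩
  -- extract accumulation point in shell
  have hshell' : ∃ᶠ k in atTop, x k ∈ (fun y => infDist y A) ⁻¹' Set.Icc (ε / 3) (2 * ε / 3) :=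
    hshell
  have hclosed : IsClosed ((fun y => infDist y A) ⁻¹' Set.Icc (ε / 3) (2 * ε / 3)) :=
    isClosed_Icc.preimage (continuous_infDist_pt A)
  obtain ⟨c, hcT, φ, hφ, hlim⟩ := aux_sub hb hclosed hshell'
  have hcS : c ∈ S := ⟨φ, hφ, hlim⟩
  have hcT1 : ε / 3 ≤ infDist c A := hcT.1
  have hcT2 : infDist c A ≤ 2 * ε / 3 := hcT.2
  rcases hsuv hcS with hcu | hcv
  · have h0 : infDist c A = 0 := infDist_zero_of_mem ⟨hcS, hcu⟩
    linarith
  · have h1 : ε ≤ infDist c A := hBfar c ⟨hcS, hcv⟩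
    linarith
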